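/- Let p ≥ 1 be an integer, let P′ be a nonempty finite set of vectors in ℝ^p, let k > 0 be a real number, and let λ* : P′ → ℝ satisfy λ*(v) ≥ 0 for all v ∈ P′ and Σ_{v∈P′} λ*(v) = k. Then there exists λ : P′ → ℝ with λ(v) ≥ 0 for all v, Σ_{v∈P′} λ(v) = k, Σ_{v∈P′} λ(v)·v vᵀ = Σ_{v∈P′} λ*(v)·v vᵀ, and the number of v ∈ P′ with λ(v) > 0 is at most p(p−1)/2 + p + 1. -/

import Mathlib

open Matrix BigOperators

/-- The "moment map" sending a vector to its symmetric outer product, encoded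
as a function on `Sym2 (Fin p)`. -/
noncomputable def momentMap (p : ℕ) (v : Fin p → ℝ) : Sym2 (Fin p) → ℝ :=
  fun s => Sym2.lift ⟨fun i j => v i * v j, fun a b => mul_comm _ _⟩ s

lemma momentMap_mk (p : ℕ) (v : Fin p → ℝ) (i j : Fin p) :
    momentMap p v (Sym2.mk i j) = v i * v j := rfl

/-- Sparsification: any fractional design can be replaced by one with the same
information matrix and total weight supported on at most C(p,2) + p + 1 vectors. -/
theorem design_sparsification
    (p : ℕ) (hp : 1 ≤ p) (P' : Finset (Fin p → ℝ)) (hP' : P'.Nonempty)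
    (k : ℝ) (hk : 0 < k) (lamStar : (Fin p → ℝ) → ℝ)
    (hnn : ∀ v ∈ P', 0 ≤ lamStar v) (hsum : ∑ v ∈ P', lamStar v = k) :
    ∃ lam : (Fin p → ℝ) → ℝ,
      (∀ v ∈ P', 0 ≤ lam v) ∧
      (∑ v ∈ P', lam v = k) ∧
      (∑ v ∈ P', lam v • vecMulVec v v) = (∑ v ∈ P', lamStar v • vecMulVec v v) ∧
      (P'.filter fun v => 0 < lam v).card ≤ p * (p - 1) / 2 + p + 1 := by
  classical
  set g : (Fin p → ℝ) → (Sym2 (Fin p) → ℝ) := momentMap p with hg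
  -- the normalized design lies in the convex hull of the moment vectors
  have hx : P'.centerMass lamStar g ∈ convexHull ℝ (g '' (P' : Set (Fin p → ℝ))) :=
    Finset.centerMass_mem_convexHull P' hnn (by rw [hsum]; exact hk)
      (fun v hv => Set.mem_image_of_mem _ hv)
  obtain ⟨ι, hι, z, w, hzs, haff, hwpos, hwsum, hwz⟩ :=
    eq_pos_convex_span_of_mem_convexHull hx
  -- choose preimages of the `z i` in `P'`
  have hchoice : ∀ i : ι, ∃ v, v ∈ P' ∧ g v = z i := by
    intro i
    obtain ⟨v, hv, hgv⟩ := hzs (Set.mem_range_self i)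
    exact ⟨v, hv, hgv⟩
  choose vf hvfP hvfz using hchoice
  have hzinj : Function.Injective z := haff.injective
  have hvfinj : Function.Injective vf := by
    intro i j hij
    exact hzinj (by rw [← hvfz, ← hvfz, hij])
  -- the sparse design
  set lam : (Fin p → ℝ) → ℝ := fun v => ∑ i : ι, if vf i = v then k * w i else 0
    with hlam
  have hlam_nn : ∀ v ∈ P', 0 ≤ lam v := by
    intro v _
    apply Finset.sum_nonneg
    intro i _
    split
    · exact mul_nonneg hk.le (hwpos i).le
    · exact le_refl 0
  have hlam_sum : ∑ v ∈ P', lam v = k := by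
    rw [hlam]
    rw [Finset.sum_comm]
    have : ∀ i : ι, (∑ v ∈ P', if vf i = v then k * w i else 0) = k * w i := by
      intro i
      rw [Finset.sum_ite_eq P' (vf i) (fun _ => k * w i)]
      simp [hvfP i]
    simp only [this, ← Finset.mul_sum, hwsum, mul_one]
  -- key identity on moment vectors
  have hkne : (k : ℝ) ≠ 0 := ne_of_gt hk
  have hmom : ∑ v ∈ P', lam v • g v = ∑ v ∈ P', lamStar v • g v := by
    have hc : P'.centerMass lamStar g = k⁻¹ • ∑ v ∈ P', lamStar v • g v := by
      rw [Finset.centerMass, hsum]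
    have h1 : ∑ v ∈ P', lam v • g v = k • ∑ i : ι, w i • z i := by
      rw [hlam]
      simp only [Finset.sum_smul, ite_smul, zero_smul]
      rw [Finset.sum_comm]
      rw [Finset.smul_sum]
      refine Finset.sum_congr rfl fun i _ => ?_
      rw [Finset.sum_ite_eq P' (vf i) (fun v => (k * w i) • g v)]
      simp [hvfP i, hvfz i, smul_smul]
    rw [h1, hwz, hc, smul_smul, mul_inv_cancel₀ hkne, one_smul]
  -- deduce equality of information matrices entrywise
  have hmat : (∑ v ∈ P', lam v • vecMulVec v v) = ∑ v ∈ P', lamStar v • vecMulVec v v := by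
    ext i j
    have := congrFun hmom (Sym2.mk i j)
    simp only [Finset.sum_apply, Pi.smul_apply, hg, momentMap_mk, smul_eq_mul] at this
    simp only [Matrix.sum_apply, Matrix.smul_apply, vecMulVec_apply, smul_eq_mul]
    exact this
  -- cardinality bound
  have hsupp : (P'.filter fun v => 0 < lam v) ⊆ Finset.image vf Finset.univ := by
    intro v hv
    rw [Finset.mem_filter] at hv
    by_contra hvn
    have hz : lam v = 0 := by
      rw [hlam]
      apply Finset.sum_eq_zero
      intro i _
      have : vf i ≠ v := by
        intro h
        exact hvn (Finset.mem_image.mpr ⟨i, Finset.mem_univ i, h⟩)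
      simp [this]
    exact absurd hz (ne_of_gt hv.2)
  have hcard1 : (P'.filter fun v => 0 < lam v).card ≤ Fintype.card ι := by
    calc (P'.filter fun v => 0 < lam v).card ≤ (Finset.image vf Finset.univ).card :=
          Finset.card_le_card hsupp
      _ ≤ Finset.univ.card := Finset.card_image_le
      _ = Fintype.card ι := Finset.card_univ
  have hcard2 : Fintype.card ι ≤ Module.finrank ℝ (Sym2 (Fin p) → ℝ) + 1 := by
    refine le_trans haff.card_le_finrank_succ ?_
    exact Nat.add_le_add_right (Submodule.finrank_le _) 1
  have hrank : Module.finrank ℝ (Sym2 (Fin p) → ℝ) = p * (p + 1) / 2 := by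
    rw [Module.finrank_fintype_fun_eq_card, Sym2.card, Fintype.card_fin,
      Nat.choose_two_right]
    simp [Nat.mul_comm]
  have harith : p * (p + 1) / 2 + 1 ≤ p * (p - 1) / 2 + p + 1 := by
    obtain ⟨q, rfl⟩ : ∃ q, p = q + 1 := ⟨p - 1, by omega⟩
    obtain ⟨m, hm⟩ : 2 ∣ (q + 1) * q := by
      have := (Nat.even_mul_succ_self q).two_dvd
      rwa [Nat.mul_comm] at this
    have h1 : (q + 1) * (q + 1 + 1) = 2 * m + 2 * (q + 1) := by
      rw [← hm]; ring
    have h2 : (q + 1) * (q + 1 - 1) = 2 * m := by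
      simpa using hm
    rw [h1, h2]
    omega
  exact ⟨lam, hlam_nn, hlam_sum, hmat, by
    calc (P'.filter fun v => 0 < lam v).card ≤ Module.finrank ℝ (Sym2 (Fin p) → ℝ) + 1 :=
          hcard1.trans hcard2
      _ = p * (p + 1) / 2 + 1 := by rw [hrank]
      _ ≤ p * (p - 1) / 2 + p + 1 := harith⟩
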